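/- (Lemma 4 (v)) For fixed x ∈ [0,1) and k ∈ ℝ, as n → ∞, r_{n+1}(x,k) − ((n+1)/(n+x))·c_n(0,x)·r_n(x,k) = (−3k/2)·(1/(n+1+x)²) + o(1/n²); i.e. n² times the difference of the two sides tends to 0. -/

import Mathlib

open MeasureTheory ProbabilityTheory Filter Real Set
open scoped ENNReal NNReal

/-- Distribution of `Z_λ = N_λ + U`, `N_λ` Poisson(λ), `U` uniform on `(0,1)`, independent. -/
noncomputable def zMeasure (l : ℝ) : Measure ℝ :=
  Measure.map (fun p : ℝ × ℝ => p.1 + p.2)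
    ((Measure.map (Nat.cast : ℕ → ℝ) (poissonMeasure l.toNNReal)).prod
      (volume.restrict (Set.Ioo (0 : ℝ) 1)))

/-- The median of `Z_λ`: `inf {t : P(Z_λ ≤ t) ≥ 1/2}`. -/
noncomputable def medianZ (l : ℝ) : ℝ :=
  sInf {t : ℝ | (1 : ℝ≥0∞) / 2 ≤ zMeasure l (Set.Iic t)}

/-- The function `H` of the main theorem. -/
noncomputable def Hfun (x : ℝ) : ℝ :=
  if x ≤ 2 / 3 then x ^ 2 * (x - 1) / 3 + 4 / 135
  else x / 3 * (x ^ 2 - 4 * x + 5) - 86 / 135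

/-- `w_n(x,k) = P(Z_{n+x} ≤ n + x + 1/3 + k/(n+x))`. -/
noncomputable def w (n : ℕ) (x k : ℝ) : ℝ :=
  (zMeasure (n + x) (Set.Iic ((n : ℝ) + x + 1 / 3 + k / (n + x)))).toReal

/-- `r_n(x,k) = k/(n+x)`. -/
noncomputable def r (n : ℕ) (x k : ℝ) : ℝ := k / (n + x)

/-- `g_n(u) = e^{-u} u^n`. -/
noncomputable def g (n : ℕ) (u : ℝ) : ℝ := Real.exp (-u) * u ^ n

/-- `c_n(v,x) = ((n+v+x)/(n+1+x))^{n+1} e^{1-v}`. -/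
noncomputable def c (n : ℕ) (v x : ℝ) : ℝ :=
  (((n : ℝ) + v + x) / ((n : ℝ) + 1 + x)) ^ (n + 1) * Real.exp (1 - v)

/-- `Δ_n(x,k) = ((n+1)!/g_{n+1}(n+1+x)) (w_{n+1}(x,k) - w_n(x,k))`. -/
noncomputable def Δfun (n : ℕ) (x k : ℝ) : ℝ :=
  ((n + 1).factorial : ℝ) / g (n + 1) ((n : ℝ) + 1 + x) * (w (n + 1) x k - w n x k)


-- L1
lemma L1 : Tendsto (fun m : ℝ => m * Real.log (1 - 1/m)) atTop (nhds (-1)) := by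
  have := Real.tendsto_mul_log_one_add_div_atTop (-1)
  refine this.congr (fun m => ?_)
  ring_nf

-- L2
lemma L2 : Tendsto (fun m : ℝ => m + m^2 * Real.log (1 - 1/m)) atTop (nhds (-(1/2))) := by
  have h0 : Tendsto (fun m : ℝ => (m + m^2 * Real.log (1 - 1/m)) + 1/2) atTop (nhds 0) := by
    apply squeeze_zero_norm' (a := fun m : ℝ => 1/(m-1))
    · filter_upwards [eventually_ge_atTop (2:ℝ)] with m hm
      have hm0 : (0:ℝ) < m := by linarith
      have hu : |1/m| < 1 := by
        rw [abs_of_pos (by positivity)]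
        rw [div_lt_one hm0]; linarith
      have key := Real.abs_log_sub_add_sum_range_le hu 2
      simp only [Finset.sum_range_succ, Finset.sum_range_zero] at key
      -- key : |(0 + (1/m)^1/(0+1) + (1/m)^2/(1+1)) + log(1 - 1/m)| ≤ |1/m|^3/(1-|1/m|)
      have habs : |1/m| = 1/m := abs_of_pos (by positivity)
      rw [habs] at key
      have e1 : m + m^2 * Real.log (1 - 1/m) + 1/2
          = m^2 * ((0 + (1/m)^1/((0:ℕ)+1) + (1/m)^2/((1:ℕ)+1)) + Real.log (1 - 1/m)) := by
        push_cast; field_simp; ring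
      rw [Real.norm_eq_abs, e1, abs_mul, abs_of_nonneg (by positivity : (0:ℝ) ≤ m^2)]
      calc m^2 * |(0 + (1/m)^1/((0:ℕ)+1) + (1/m)^2/((1:ℕ)+1)) + Real.log (1 - 1/m)|
          ≤ m^2 * ((1/m)^(2+1)/(1-1/m)) := by
            exact mul_le_mul_of_nonneg_left key (by positivity)
        _ = 1/(m-1) := by
            have hm1 : m - 1 ≠ 0 := by linarith
            field_simp
            rw [← mul_pow, mul_one_div_cancel hm0.ne', one_pow]
    · have : Tendsto (fun m : ℝ => m - 1) atTop atTop :=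
        tendsto_atTop_add_const_right _ (-1) tendsto_id
      simpa [one_div, Function.comp_def] using tendsto_inv_atTop_zero.comp this
  have h1 := h0.sub_const (1/2)
  have h2 : Tendsto (fun m : ℝ => m + m^2 * Real.log (1 - 1/m)) atTop (nhds (0 - 1/2)) :=
    h1.congr (fun m => by ring)
  simpa using h2

noncomputable def hh (x m : ℝ) : ℝ := 1 + (m - x) * Real.log (1 - 1/m)

-- L3 : m * hh → x - 1/2
lemma L3 (x : ℝ) : Tendsto (fun m : ℝ => m * hh x m) atTop (nhds (x - 1/2)) := by
  have := L2.sub (L1.const_mul x)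
  have h2 : Tendsto (fun m : ℝ => m * hh x m) atTop (nhds (-(1/2) - x * (-1))) :=
    this.congr (fun m => by unfold hh; ring)
  convert h2 using 2; ring

-- L4 : hh → 0
lemma L4 (x : ℝ) : Tendsto (fun m : ℝ => hh x m) atTop (nhds 0) := by
  have := ((tendsto_inv_atTop_zero (𝕜 := ℝ)).mul (L3 x))
  rw [zero_mul] at this
  refine this.congr' ?_
  filter_upwards [eventually_gt_atTop (0:ℝ)] with m hm
  field_simp

-- L5 : m * (1 - exp (hh)) → 1/2 - x
lemma L5 (x : ℝ) : Tendsto (fun m : ℝ => m * (1 - Real.exp (hh x m))) atTop (nhds (1/2 - x)) := by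
  have t1 : Tendsto (fun m : ℝ => m * (Real.exp (hh x m) - 1 - hh x m)) atTop (nhds 0) := by
    apply squeeze_zero_norm' (a := fun m : ℝ => |m * hh x m * hh x m|)
    · filter_upwards [eventually_ge_atTop (0:ℝ),
        ((L4 x).abs.eventually_le_const (by norm_num : |(0:ℝ)| < 1))] with m hm hhm
      have := Real.abs_exp_sub_one_sub_id_le hhm
      rw [Real.norm_eq_abs, abs_mul, abs_of_nonneg hm, abs_mul, abs_mul,
        abs_of_nonneg hm, mul_assoc, ← abs_mul, ← sq]
      exact mul_le_mul_of_nonneg_left (this.trans (le_abs_self _)) hm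
    · have := ((L3 x).mul (L4 x)).abs
      simpa using this
  have := (t1.neg).sub (L3 x)
  have h2 : Tendsto (fun m : ℝ => m * (1 - Real.exp (hh x m))) atTop (nhds (-0 - (x - 1/2))) :=
    this.congr (fun m => by ring)
  convert h2 using 2; ring

-- L6 : m * (1 - A) → x - 2 where A = m(m-x)/(m-1)^2
lemma L6 (x : ℝ) : Tendsto (fun m : ℝ => m * (1 - m * (m - x) / (m - 1)^2)) atTop (nhds (x - 2)) := by
  have hinv : Tendsto (fun m : ℝ => 1/m) atTop (nhds 0) := by
    simpa [one_div] using tendsto_inv_atTop_zero (𝕜 := ℝ)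
  have hnum : Tendsto (fun m : ℝ => ((x - 2) + 1/m) / (1 - 1/m)^2) atTop
      (nhds (((x - 2) + 0) / (1 - 0)^2)) :=
    Tendsto.div (tendsto_const_nhds.add hinv) ((tendsto_const_nhds.sub hinv).pow 2) (by norm_num)
  have heq : ∀ᶠ m in atTop, ((x - 2) + 1/m) / (1 - 1/m)^2 = m * (1 - m * (m - x) / (m - 1)^2) := by
    filter_upwards [eventually_gt_atTop (1:ℝ)] with m hm
    have hm0 : m ≠ 0 := by linarith
    have hm1 : m - 1 ≠ 0 := by linarith
    field_simp
    ring
  have h2 := hnum.congr' heq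
  norm_num at h2
  exact h2

-- A → 1
lemma L7 (x : ℝ) : Tendsto (fun m : ℝ => m * (m - x) / (m - 1)^2) atTop (nhds 1) := by
  have := (tendsto_inv_atTop_zero (𝕜 := ℝ)).mul (L6 x)
  rw [zero_mul] at this
  have h2 := (tendsto_const_nhds (x := (1:ℝ)) (f := atTop)).sub this
  rw [sub_zero] at h2
  refine h2.congr' ?_
  filter_upwards [eventually_gt_atTop (0:ℝ)] with m hm
  have hm0 : m ≠ 0 := ne_of_gt hm
  field_simp
  ring

-- main real lemma
lemma Lmain (x : ℝ) : Tendsto (fun m : ℝ => m^2 * (1/m + 3/(2*m^2)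
    - (m - x)/(m-1)^2 * Real.exp (1 + (m - x) * Real.log ((m-1)/m)))) atTop (nhds 0) := by
  have hsum := ((L6 x).add ((L7 x).mul (L5 x))).add_const (3/2)
  have : (x - 2 + (1 * (1/2 - x))) + 3/2 = 0 := by ring
  rw [this] at hsum
  refine hsum.congr' ?_
  filter_upwards [eventually_gt_atTop (1:ℝ)] with m hm
  have hm0 : m ≠ 0 := by linarith
  have hm1 : m - 1 ≠ 0 := by linarith
  have hlog : Real.log ((m-1)/m) = Real.log (1 - 1/m) := by
    congr 1; field_simp
  rw [hlog]
  unfold hh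
  set E := Real.exp (1 + (m - x) * Real.log (1 - 1/m))
  field_simp
  ring

set_option maxHeartbeats 1000000 in
theorem lemma4_v (x k : ℝ) (hx : x ∈ Set.Ico (0 : ℝ) 1) :
    Tendsto (fun n : ℕ => (n : ℝ) ^ 2 *
      ((r (n + 1) x k - ((n : ℝ) + 1) / ((n : ℝ) + x) * c n 0 x * r n x k) -
        (-(3 * k) / 2 * (1 / ((n : ℝ) + 1 + x) ^ 2))))
      atTop (nhds 0) := by
  obtain ⟨hx0, _⟩ := hx
  have hm : Tendsto (fun n : ℕ => (n : ℝ) + 1 + x) atTop atTop := by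
    have := tendsto_atTop_add_const_right atTop (1 + x) tendsto_natCast_atTop_atTop
    exact this.congr (fun n => by ring)
  have hE := (Lmain x).comp hm
  have hratio : Tendsto (fun n : ℕ => (n : ℝ) / ((n : ℝ) + 1 + x)) atTop (nhds 1) := by
    have := tendsto_natCast_div_add_atTop (1 + x)
    exact this.congr (fun n => by rw [add_assoc])
  have hfin := (tendsto_const_nhds (x := k) (f := atTop)).mul ((hratio.pow 2).mul hE)
  rw [show k * (1 ^ 2 * 0) = 0 by ring] at hfin
  refine hfin.congr' ?_
  filter_upwards [eventually_ge_atTop 1] with n hn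
  have hy1 : (1 : ℝ) ≤ (n : ℝ) := by exact_mod_cast hn
  set y : ℝ := (n : ℝ) with hy
  have hyx : (0 : ℝ) < y + x := by linarith
  have hm1 : (0 : ℝ) < y + 1 + x := by linarith
  have hfrac : (0 : ℝ) < (y + x) / (y + 1 + x) := div_pos hyx hm1
  have hexp : ((y + x) / (y + 1 + x)) ^ (n + 1) * Real.exp 1
      = Real.exp (1 + ((y + 1 + x) - x) * Real.log (((y + 1 + x) - 1) / (y + 1 + x))) := by
    rw [← Real.exp_log hfrac, ← Real.exp_nat_mul, ← Real.exp_add]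
    congr 1
    · push_cast; ring_nf
      rw [← hy]
  simp only [Function.comp]
  unfold r c
  rw [show ((n:ℝ) + 0 + x) = y + x by ring]
  push_cast
  rw [show ((y + x) / (y + 1 + x)) ^ (n + 1) * Real.exp (1 - 0)
      = Real.exp (1 + ((y + 1 + x) - x) * Real.log (((y + 1 + x) - 1) / (y + 1 + x))) by
    rw [← hexp]; norm_num]
  set E := Real.exp (1 + ((y + 1 + x) - x) * Real.log (((y + 1 + x) - 1) / (y + 1 + x)))
  have h1 : y + x ≠ 0 := ne_of_gt hyx
  have h2 : y + 1 + x ≠ 0 := ne_of_gt hm1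
  set m : ℝ := y + 1 + x with hmdef
  set Z : ℝ := 1 / m + 3 / (2 * m ^ 2) - (m - x) / (m - 1) ^ 2 * E with hZ
  have step1 : k * ((y / m) ^ 2 * (m ^ 2 * Z)) = y ^ 2 * (k * Z) := by
    rw [div_pow]
    field_simp
  rw [step1]
  congr 1
  rw [hZ]
  have hm1x : m - 1 = y + x := by rw [hmdef]; ring
  have hmx : m - x = y + 1 := by rw [hmdef]; ring
  rw [hm1x, hmx]
  field_simp
  ring
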